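/- Let q ∈ (0,1). For any α > 0 and any α' with qα ≤ α' ≤ α, one has e1(α') ≤ q^{-1} e1(α). -/

import Mathlib

open MeasureTheory
open scoped RealInnerProductSpace

noncomputable section

variable {H F : Type*} [NormedAddCommGroup H] [InnerProductSpace ℝ H] [CompleteSpace H]
  [NormedAddCommGroup F] [InnerProductSpace ℝ F] [CompleteSpace F]

/-- The inverse `(α I + A* A)⁻¹` (as `Ring.inverse`; for `α > 0` the operator
`α I + A* A` is boundedly invertible, so `Ring.inverse` is its genuine inverse). -/
def tikInv (A : H →L[ℝ] F) (α : ℝ) : H →L[ℝ] H :=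
  Ring.inverse (α • (1 : H →L[ℝ] H) + (ContinuousLinearMap.adjoint A).comp A)

/-- Tikhonov approximation `u_α = (α I + A* A)⁻¹ A* f`. -/
def tikSol (A : H →L[ℝ] F) (f : F) (α : ℝ) : H :=
  tikInv A α (ContinuousLinearMap.adjoint A f)

/-- Quasi-optimality function `ψ_Q(α) = α ‖(α I + A* A)⁻² A* f‖`. -/
def psiQ (A : H →L[ℝ] F) (f : F) (α : ℝ) : ℝ :=
  α * ‖(tikInv A α ^ 2) (ContinuousLinearMap.adjoint A f)‖

/-- Error functional `e1(α) = ‖u_α⁺ - u_*‖ + ‖u_α - u_α⁺‖`. -/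
def e1 (A : H →L[ℝ] F) (f fstar : F) (ustar : H) (α : ℝ) : ℝ :=
  ‖tikSol A fstar α - ustar‖ + ‖tikSol A f α - tikSol A fstar α‖

/-- Error functional `e2(α, δ) = ‖u_α⁺ - u_*‖ + δ/(2 √α)`. -/
def e2 (A : H →L[ℝ] F) (fstar : F) (ustar : H) (δ α : ℝ) : ℝ :=
  ‖tikSol A fstar α - ustar‖ + δ / (2 * Real.sqrt α)

/-- Modified discrepancy `d_MD(α) = ‖B_α (A u_α - f)‖` where
`B_α = α^{1/2} (α I + A A*)^{-1/2}`; since `B_α` is positive and selfadjoint,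
`‖B_α w‖² = α ⟪(α I + A A*)⁻¹ w, w⟫`, which is used as the definition. -/
def dMD (A : H →L[ℝ] F) (f : F) (α : ℝ) : ℝ :=
  Real.sqrt (α * ⟪(Ring.inverse (α • (1 : F →L[ℝ] F) + A.comp (ContinuousLinearMap.adjoint A)))
      (A (tikSol A f α) - f), A (tikSol A f α) - f⟫)

/-- `k` is a local minimum point of `j ↦ ψ(α_j)` on the grid `j = 0, …, N`:
either `k ≤ N - 1`, `ψ k < ψ (k+1)` and (`k = 0` or there is `j ≥ 1` with
`ψ k = ψ (k-1) = ⋯ = ψ (k-j+1) < ψ (k-j)`); or `k = N` and there is `j ≥ 1` with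
`ψ N = ⋯ = ψ (N-j+1) < ψ (N-j)`. -/
def IsLocMinIdx (ψ : ℕ → ℝ) (N k : ℕ) : Prop :=
  (k < N ∧ ψ k < ψ (k + 1) ∧
    (k = 0 ∨ ∃ j, 1 ≤ j ∧ j ≤ k ∧ (∀ i, k - j < i → i ≤ k → ψ i = ψ k) ∧ ψ k < ψ (k - j)))
  ∨ (k = N ∧ ∃ j, 1 ≤ j ∧ j ≤ N ∧ (∀ i, N - j < i → i ≤ N → ψ i = ψ N) ∧ ψ N < ψ (N - j))

lemma tik_inner_self (A : H →L[ℝ] F) (β : ℝ) (x : H) :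
    ⟪(β • (1 : H →L[ℝ] H) + (ContinuousLinearMap.adjoint A).comp A) x, x⟫
      = β * ‖x‖ ^ 2 + ‖A x‖ ^ 2 := by
  have h1 : ⟪(ContinuousLinearMap.adjoint A) (A x), x⟫ = ‖A x‖ ^ 2 := by
    rw [ContinuousLinearMap.adjoint_inner_left, real_inner_self_eq_norm_sq]
  simp [ContinuousLinearMap.add_apply, ContinuousLinearMap.smul_apply,
    ContinuousLinearMap.one_apply, inner_add_left, real_inner_smul_left,
    real_inner_self_eq_norm_sq, h1]

lemma tik_isUnit (A : H →L[ℝ] F) {β : ℝ} (hβ : 0 < β) :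
    IsUnit (β • (1 : H →L[ℝ] H) + (ContinuousLinearMap.adjoint A).comp A) := by
  set S := β • (1 : H →L[ℝ] H) + (ContinuousLinearMap.adjoint A).comp A with hS
  have hcoer : IsCoercive ((innerSL ℝ).comp S) := by
    refine ⟨β, hβ, fun u => ?_⟩
    have h2 : ((innerSL ℝ).comp S) u u = β * ‖u‖ ^ 2 + ‖A u‖ ^ 2 := by
      rw [hS]; exact tik_inner_self A β u
    rw [h2]
    nlinarith [sq_nonneg ‖A u‖, norm_nonneg u]
  set E := hcoer.continuousLinearEquivOfBilin with hEdef
  have hE : ∀ v, E v = S v := by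
    intro v
    apply ext_inner_right ℝ
    intro w
    rw [hcoer.continuousLinearEquivOfBilin_apply]
    simp [ContinuousLinearMap.comp_apply]
  refine isUnit_iff_exists.mpr ⟨(E.symm : H →L[ℝ] H), ?_, ?_⟩
  · ext x
    have : S (E.symm x) = E (E.symm x) := (hE _).symm
    simp [ContinuousLinearMap.mul_apply, this]
  · ext x
    have : (E.symm : H →L[ℝ] H) (S x) = E.symm (E x) := by
      rw [hE]; rfl
    simp [ContinuousLinearMap.mul_apply, this]

lemma S_tikInv (A : H →L[ℝ] F) {β : ℝ} (hβ : 0 < β) (y : H) :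
    (β • (1 : H →L[ℝ] H) + (ContinuousLinearMap.adjoint A).comp A) (tikInv A β y) = y := by
  have h := Ring.mul_inverse_cancel _ (tik_isUnit A hβ)
  have := congrArg (fun (T : H →L[ℝ] H) => T y) h
  simpa [ContinuousLinearMap.mul_apply, tikInv] using this

lemma tikInv_S (A : H →L[ℝ] F) {β : ℝ} (hβ : 0 < β) (x : H) :
    tikInv A β ((β • (1 : H →L[ℝ] H) + (ContinuousLinearMap.adjoint A).comp A) x) = x := by
  have h := Ring.inverse_mul_cancel _ (tik_isUnit A hβ)
  have := congrArg (fun (T : H →L[ℝ] H) => T x) h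
  simpa [ContinuousLinearMap.mul_apply, tikInv] using this

lemma norm_tikInv_le (A : H →L[ℝ] F) {β : ℝ} (hβ : 0 < β) (y : H) :
    β * ‖tikInv A β y‖ ≤ ‖y‖ := by
  have hSx := S_tikInv A hβ y
  have h1 : β * ‖tikInv A β y‖ ^ 2 ≤ ⟪y, tikInv A β y⟫ := by
    calc β * ‖tikInv A β y‖ ^ 2
        ≤ β * ‖tikInv A β y‖ ^ 2 + ‖A (tikInv A β y)‖ ^ 2 := by
          nlinarith [sq_nonneg ‖A (tikInv A β y)‖]
      _ = ⟪(β • (1 : H →L[ℝ] H) + (ContinuousLinearMap.adjoint A).comp A) (tikInv A β y),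
            tikInv A β y⟫ := (tik_inner_self A β _).symm
      _ = ⟪y, tikInv A β y⟫ := by rw [hSx]
  have h2 : ⟪y, tikInv A β y⟫ ≤ ‖y‖ * ‖tikInv A β y‖ := real_inner_le_norm y _
  rcases eq_or_lt_of_le (norm_nonneg (tikInv A β y)) with h | h
  · rw [← h, mul_zero]; exact norm_nonneg y
  · nlinarith

lemma tikInv_res (A : H →L[ℝ] F) {α α' : ℝ} (hα' : 0 < α') (h2 : α' ≤ α) (y : H) :
    tikInv A α' y = (α - α') • tikInv A α' (tikInv A α y) + tikInv A α y := by
  have hα : 0 < α := lt_of_lt_of_le hα' h2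
  set T := (ContinuousLinearMap.adjoint A).comp A with hT
  have key : (α' • (1 : H →L[ℝ] H) + T)
      ((α - α') • tikInv A α' (tikInv A α y) + tikInv A α y) = y := by
    rw [map_add, _root_.map_smul, S_tikInv A hα' (tikInv A α y)]
    have hstep : (α' • (1 : H →L[ℝ] H) + T) (tikInv A α y)
        = (α • (1 : H →L[ℝ] H) + T) (tikInv A α y) - (α - α') • tikInv A α y := by
      simp only [ContinuousLinearMap.add_apply, ContinuousLinearMap.smul_apply,
        ContinuousLinearMap.one_apply, sub_smul]
      abel
    rw [hstep, S_tikInv A hα y]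
    abel
  conv_lhs => rw [← key, tikInv_S A hα']

/-- for `q ∈ (0,1)`, `α > 0` and `qα ≤ α' ≤ α`, `e1(α') ≤ q⁻¹ e1(α)`. -/
theorem e1_le_inv_q_mul_e1 (A : H →L[ℝ] F) (f fstar : F) (ustar : H)
    (hA : A ustar = fstar) (q : ℝ) (hq : q ∈ Set.Ioo (0 : ℝ) 1)
    (α α' : ℝ) (hα : 0 < α) (h1 : q * α ≤ α') (h2 : α' ≤ α) :
    e1 A f fstar ustar α' ≤ q⁻¹ * e1 A f fstar ustar α := by
  obtain ⟨hq0, hq1⟩ := hq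
  have hα' : 0 < α' := lt_of_lt_of_le (mul_pos hq0 hα) h1
  have hfstar : ContinuousLinearMap.adjoint A fstar
      = ((ContinuousLinearMap.adjoint A).comp A) ustar := by rw [← hA]; rfl
  have hfirst : ∀ β : ℝ, 0 < β →
      ‖tikSol A fstar β - ustar‖ = β * ‖tikInv A β ustar‖ := by
    intro β hβ
    have hplus : tikSol A fstar β - ustar = -(β • tikInv A β ustar) := by
      have hT : ((ContinuousLinearMap.adjoint A).comp A) ustar
          = (β • (1 : H →L[ℝ] H) + (ContinuousLinearMap.adjoint A).comp A) ustar
            - β • ustar := by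
        simp [ContinuousLinearMap.add_apply, ContinuousLinearMap.smul_apply,
          ContinuousLinearMap.one_apply]
      rw [tikSol, hfstar, hT, map_sub, tikInv_S A hβ, _root_.map_smul]
      abel
    rw [hplus, norm_neg, norm_smul, Real.norm_of_nonneg hβ.le]
  set g := ContinuousLinearMap.adjoint A f - ContinuousLinearMap.adjoint A fstar with hg
  have hsecond : ∀ β : ℝ, tikSol A f β - tikSol A fstar β = tikInv A β g := by
    intro β; rw [hg, map_sub]; rfl
  have hres1 := tikInv_res A hα' h2 ustar
  have hb1 : α' * ‖tikInv A α' ustar‖ ≤ α * ‖tikInv A α ustar‖ := by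
    have h3 : α' * ‖tikInv A α' (tikInv A α ustar)‖ ≤ ‖tikInv A α ustar‖ :=
      norm_tikInv_le A hα' _
    calc α' * ‖tikInv A α' ustar‖
        = α' * ‖(α - α') • tikInv A α' (tikInv A α ustar) + tikInv A α ustar‖ := by
          rw [← hres1]
      _ ≤ α' * ((α - α') * ‖tikInv A α' (tikInv A α ustar)‖ + ‖tikInv A α ustar‖) := by
          refine mul_le_mul_of_nonneg_left ((norm_add_le _ _).trans ?_) hα'.le
          rw [norm_smul, Real.norm_of_nonneg (by linarith)]
      _ ≤ α * ‖tikInv A α ustar‖ := by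
          nlinarith [norm_nonneg (tikInv A α' (tikInv A α ustar)),
            norm_nonneg (tikInv A α ustar)]
  have hres2 := tikInv_res A hα' h2 g
  have hb2 : ‖tikInv A α' g‖ ≤ q⁻¹ * ‖tikInv A α g‖ := by
    have h3 : α' * ‖tikInv A α' (tikInv A α g)‖ ≤ ‖tikInv A α g‖ := norm_tikInv_le A hα' _
    have h4 : ‖tikInv A α' g‖
        ≤ (α - α') * ‖tikInv A α' (tikInv A α g)‖ + ‖tikInv A α g‖ := by
      rw [hres2]
      refine (norm_add_le _ _).trans ?_
      rw [norm_smul, Real.norm_of_nonneg (by linarith)]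
    rw [inv_mul_eq_div, le_div_iff₀ hq0]
    nlinarith [norm_nonneg (tikInv A α' (tikInv A α g)), norm_nonneg (tikInv A α g),
      mul_le_mul_of_nonneg_left h3 (by linarith : (0:ℝ) ≤ 1 - q),
      mul_le_mul_of_nonneg_right h4 hq0.le,
      mul_le_mul_of_nonneg_right h1 (norm_nonneg (tikInv A α' (tikInv A α g)))]
  have hq_ge : (1 : ℝ) ≤ q⁻¹ := by
    have := inv_anti₀ hq0 hq1.le
    simpa using this
  rw [e1, e1, hfirst α' hα', hfirst α hα, hsecond, hsecond]
  nlinarith [hb1, hb2, norm_nonneg (tikInv A α ustar), norm_nonneg (tikInv A α g),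
    mul_le_mul_of_nonneg_right hq_ge
      (mul_nonneg hα.le (norm_nonneg (tikInv A α ustar)))]
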